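/- (Appendix A non-uniqueness construction for factorized priors.) Let μ = μ₁ ⊗ ⋯ ⊗ μ_d be a product of Borel probability measures on ℝ, each μ_i having a continuous and strictly increasing cumulative distribution function F_i : ℝ → (0,1) that is a bijection onto (0,1). Let Φ : ℝ → (0,1) denote the cumulative distribution function of the standard normal distribution, and let U be a d×d orthogonal matrix. Define r : ℝᵈ → ℝᵈ by r(z)_i = F_i⁻¹(Φ((U w)_i)) where w_j = Φ⁻¹(F_j(z_j)) for each j. Then r#μ = μ, i.e. the map r leaves the factorized prior invariant while mixing its coordinates whenever U is not a signed permutation matrix. -/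

import Mathlib

open MeasureTheory ProbabilityTheory
open Real ENNReal Matrix

theorem my_lintegral_pi_prod {n : ℕ} (μ : Fin n → Measure ℝ) [∀ i, SigmaFinite (μ i)]
    {g : Fin n → ℝ → ℝ≥0∞} (hg : ∀ i, Measurable (g i)) :
    ∫⁻ x, ∏ i, g i (x i) ∂Measure.pi μ = ∏ i, ∫⁻ t, g i t ∂μ i := by
  induction n with
  | zero => simp
  | succ n ih =>
    have h := measurePreserving_piFinSuccAbove μ 0
    have hm : Measurable fun p : ℝ × (Fin n → ℝ) =>
        g 0 p.1 * ∏ j : Fin n, g j.succ (p.2 j) :=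
      ((hg 0).comp measurable_fst).mul
        (Finset.measurable_prod _ fun j _ =>
          (hg j.succ).comp ((measurable_pi_apply j).comp measurable_snd))
    calc ∫⁻ x, ∏ i, g i (x i) ∂Measure.pi μ
        = ∫⁻ p : ℝ × (Fin n → ℝ), g 0 p.1 * ∏ j : Fin n, g j.succ (p.2 j)
            ∂((μ 0).prod (Measure.pi fun j => μ (Fin.succAbove 0 j))) := by
          rw [← h.lintegral_comp hm]
          congr 1
          ext x
          simp [MeasurableEquiv.piFinSuccAbove, Fin.prod_univ_succ, Fin.zero_succAbove, Fin.tail]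
      _ = (∫⁻ t, g 0 t ∂μ 0) * ∏ j : Fin n, ∫⁻ t, g j.succ t ∂μ (Fin.succAbove 0 j) := by
          rw [lintegral_prod_mul (f := g 0) (g := fun (w : Fin n → ℝ) => ∏ j : Fin n, g j.succ (w j)) ((hg 0).aemeasurable)
            ((Finset.measurable_prod _ fun j _ =>
              (hg j.succ).comp (measurable_pi_apply j)).aemeasurable)]
          rw [ih (fun j => μ (Fin.succAbove 0 j)) (fun j => hg j.succ)]
      _ = ∏ i, ∫⁻ t, g i t ∂μ i := by
          rw [Fin.prod_univ_succ]
          simp [Fin.zero_succAbove]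

theorem my_pi_gaussian_eq {d : ℕ} :
    (Measure.pi fun _ : Fin d => gaussianReal 0 1)
      = (volume : Measure (Fin d → ℝ)).withDensity
          (fun x => ∏ i, gaussianPDF 0 1 (x i)) := by
  refine Measure.pi_eq fun s hs => ?_
  rw [withDensity_apply _ (MeasurableSet.univ_pi hs)]
  have hind : ∀ x : Fin d → ℝ, (Set.univ.pi s).indicator
      (fun x => ∏ i, gaussianPDF 0 1 (x i)) x
      = ∏ i, (s i).indicator (gaussianPDF 0 1) (x i) := by
    intro x
    by_cases hx : x ∈ Set.univ.pi s
    · rw [Set.indicator_of_mem hx]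
      refine Finset.prod_congr rfl fun i _ => ?_
      rw [Set.indicator_of_mem (hx i (Set.mem_univ i))]
    · rw [Set.indicator_of_notMem hx]
      rw [Set.mem_univ_pi] at hx
      push_neg at hx
      obtain ⟨i, hi⟩ := hx
      exact (Finset.prod_eq_zero (Finset.mem_univ i)
        (by rw [Set.indicator_of_notMem hi])).symm
  rw [← lintegral_indicator (MeasurableSet.univ_pi hs)]
  simp_rw [hind]
  rw [volume_pi, my_lintegral_pi_prod _
    (fun i => (measurable_gaussianPDF 0 1).indicator (hs i))]
  refine Finset.prod_congr rfl fun i _ => ?_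
  rw [lintegral_indicator (hs i), ← gaussianReal_apply 0 one_ne_zero]

theorem my_gauss_inv {d : ℕ} (U : Matrix (Fin d) (Fin d) ℝ)
    (hU : U ∈ Matrix.orthogonalGroup (Fin d) ℝ) :
    (Measure.pi fun _ : Fin d => gaussianReal 0 1).map (fun x => U.mulVec x)
      = Measure.pi fun _ : Fin d => gaussianReal 0 1 := by
  have h1 : Uᵀ * U = 1 := by
    have := (Matrix.mem_orthogonalGroup_iff' _ _).mp hU
    exact this
  have hdet : U.det = 1 ∨ U.det = -1 := by
    have := congrArg Matrix.det h1
    rw [Matrix.det_mul, Matrix.det_transpose, Matrix.det_one] at this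
    exact mul_self_eq_one_iff.mp this
  have hdet0 : U.det ≠ 0 := by rcases hdet with h | h <;> rw [h] <;> norm_num
  have habs : |U.det⁻¹| = 1 := by rcases hdet with h | h <;> rw [h] <;> norm_num
  have hcont : Continuous (Matrix.toLin' U) := LinearMap.continuous_on_pi _
  have hvol : MeasurePreserving (Matrix.toLin' U)
      (volume : Measure (Fin d → ℝ)) volume := by
    refine ⟨hcont.measurable, ?_⟩
    rw [Real.map_matrix_volume_pi_eq_smul_volume_pi hdet0, habs, ENNReal.ofReal_one, one_smul]
  have hsum : ∀ x : Fin d → ℝ, ∑ i, (U.mulVec x i)^2 = ∑ i, (x i)^2 := by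
    intro x
    have : U.mulVec x ⬝ᵥ U.mulVec x = x ⬝ᵥ x := by
      rw [Matrix.dotProduct_mulVec, ← Matrix.mulVec_transpose, Matrix.mulVec_mulVec, h1,
        Matrix.one_mulVec]
    simpa [dotProduct, sq] using this
  set h : (Fin d → ℝ) → ℝ≥0∞ := fun x => ∏ i, gaussianPDF 0 1 (x i) with hh_def
  have hhm : Measurable h :=
    Finset.measurable_prod _ fun i _ =>
      (measurable_gaussianPDF 0 1).comp (measurable_pi_apply i)
  have hprodReal : ∀ v : Fin d → ℝ, h v
      = ENNReal.ofReal (∏ i, gaussianPDFReal 0 1 (v i)) := by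
    intro v
    rw [ENNReal.ofReal_prod_of_nonneg fun i _ => (gaussianPDFReal_pos 0 1 (v i) one_ne_zero).le]
    rfl
  have hhU : ∀ x, h (U.mulVec x) = h x := by
    intro x
    rw [hprodReal, hprodReal]
    congr 1
    simp only [gaussianPDFReal, sub_zero, Finset.prod_mul_distrib, Finset.prod_const,
      ← Real.exp_sum]
    congr 1
    simp only [neg_div, Finset.sum_neg_distrib]
    rw [← Finset.sum_div, ← Finset.sum_div, hsum x]
  have hUfun : (fun x => U.mulVec x) = ⇑(Matrix.toLin' U) := by
    funext x; rw [Matrix.toLin'_apply]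
  rw [my_pi_gaussian_eq, ← hh_def, hUfun]
  ext s hs
  rw [Measure.map_apply hcont.measurable hs, withDensity_apply _ (hs.preimage hcont.measurable),
    withDensity_apply _ hs, ← lintegral_indicator (hs.preimage hcont.measurable),
    ← lintegral_indicator hs]
  have : ∀ x, ((⇑(Matrix.toLin' U)) ⁻¹' s).indicator h x = s.indicator h (Matrix.toLin' U x) := by
    intro x
    by_cases hx : Matrix.toLin' U x ∈ s
    · rw [Set.indicator_of_mem hx, Set.indicator_of_mem (by exact hx)]
      rw [← hhU x, Matrix.toLin'_apply]
    · rw [Set.indicator_of_notMem hx, Set.indicator_of_notMem (by exact hx)]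
  simp_rw [this]
  exact hvol.lintegral_comp (hhm.indicator hs)

theorem my_gauss_pos (s : Set ℝ) (hs : volume s ≠ 0) : gaussianReal 0 1 s ≠ 0 := by
  intro h
  exact hs ((gaussianReal_absolutelyContinuous' 0 one_ne_zero) h)

theorem my_Phi_mem (t : ℝ) : (gaussianReal 0 1 (Set.Iic t)).toReal ∈ Set.Ioo (0 : ℝ) 1 := by
  have h1 : gaussianReal 0 1 (Set.Iic t) ≠ 0 := my_gauss_pos _ (by simp)
  have h2 : gaussianReal 0 1 (Set.Ioi t) ≠ 0 := my_gauss_pos _ (by simp)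
  have hne : gaussianReal 0 1 (Set.Iic t) ≠ ⊤ := measure_ne_top _ _
  constructor
  · exact ENNReal.toReal_pos h1 hne
  · have hlt : gaussianReal 0 1 (Set.Iic t) < 1 := by
      have hadd : gaussianReal 0 1 (Set.Iic t) + gaussianReal 0 1 (Set.Ioi t) = 1 := by
        rw [← measure_union (Set.Iic_disjoint_Ioi le_rfl) measurableSet_Ioi,
          Set.Iic_union_Ioi, measure_univ]
      calc gaussianReal 0 1 (Set.Iic t)
          < gaussianReal 0 1 (Set.Iic t) + gaussianReal 0 1 (Set.Ioi t) :=
            ENNReal.lt_add_right hne h2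
        _ = 1 := hadd
    have := ENNReal.toReal_lt_toReal hne (by norm_num : (1 : ℝ≥0∞) ≠ ⊤) |>.mpr hlt
    simpa using this

theorem my_Phi_mono : StrictMono fun t => (gaussianReal 0 1 (Set.Iic t)).toReal := by
  intro s t hst
  have hne : gaussianReal 0 1 (Set.Iic s) ≠ ⊤ := measure_ne_top _ _
  have h2 : gaussianReal 0 1 (Set.Ioc s t) ≠ 0 :=
    my_gauss_pos _ (by simp [Real.volume_Ioc, hst, sub_pos.mpr hst])
  have hlt : gaussianReal 0 1 (Set.Iic s) < gaussianReal 0 1 (Set.Iic t) := by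
    have : gaussianReal 0 1 (Set.Iic t)
        = gaussianReal 0 1 (Set.Iic s) + gaussianReal 0 1 (Set.Ioc s t) := by
      rw [← measure_union (Set.Iic_disjoint_Ioc le_rfl) measurableSet_Ioc,
        Set.Iic_union_Ioc_eq_Iic hst.le]
    rw [this]
    exact ENNReal.lt_add_right hne h2
  exact (ENNReal.toReal_lt_toReal hne (measure_ne_top _ _)).mpr hlt


/-- Appendix A non-uniqueness construction for factorized priors: composing the coordinatewise
probability integral transforms (to uniform, then to standard normal), an orthogonal map `U`,
and the inverse transforms, leaves a factorized prior `μ = μ₁ ⊗ ⋯ ⊗ μ_d` invariant. -/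
theorem factorized_prior_invariant_transform {d : ℕ}
    (μ : Fin d → Measure ℝ) [∀ i, IsProbabilityMeasure (μ i)]
    (F : Fin d → ℝ → ℝ) (hF : ∀ i t, F i t = (μ i (Set.Iic t)).toReal)
    (hFcont : ∀ i, Continuous (F i)) (hFmono : ∀ i, StrictMono (F i))
    (hFrange : ∀ i, Set.range (F i) = Set.Ioo (0 : ℝ) 1)
    (G : Fin d → ℝ → ℝ)
    (hGF : ∀ i t, G i (F i t) = t)
    (hFG : ∀ i, ∀ y ∈ Set.Ioo (0 : ℝ) 1, F i (G i y) = y)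
    (Φ : ℝ → ℝ) (hΦ : ∀ t, Φ t = (gaussianReal 0 1 (Set.Iic t)).toReal)
    (Φinv : ℝ → ℝ)
    (hΦinvΦ : ∀ t, Φinv (Φ t) = t)
    (hΦΦinv : ∀ y ∈ Set.Ioo (0 : ℝ) 1, Φ (Φinv y) = y)
    (U : Matrix (Fin d) (Fin d) ℝ) (hU : U ∈ Matrix.orthogonalGroup (Fin d) ℝ)
    (r : (Fin d → ℝ) → (Fin d → ℝ))
    (hr : ∀ z i, r z i = G i (Φ (U.mulVec (fun j => Φinv (F j (z j))) i))) :
    (Measure.pi μ).map r = Measure.pi μ := by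
  have hΦmem : ∀ t, Φ t ∈ Set.Ioo (0 : ℝ) 1 := by
    intro t; rw [hΦ]; exact my_Phi_mem t
  have hΦmono : StrictMono Φ := by
    have h : Φ = fun t => (gaussianReal 0 1 (Set.Iic t)).toReal := funext hΦ
    rw [h]; exact my_Phi_mono
  have hFmem : ∀ i t, F i t ∈ Set.Ioo (0 : ℝ) 1 := fun i t =>
    (hFrange i) ▸ Set.mem_range_self t
  -- the coordinatewise forward transforms are measure preserving
  have hA : ∀ i, MeasurePreserving (fun t => Φinv (F i t)) (μ i) (gaussianReal 0 1) := by
    intro i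
    have hmono : StrictMono fun t => Φinv (F i t) := by
      intro a b hab
      have h1 : F i a < F i b := hFmono i hab
      have h2 := hΦmono.lt_iff_lt (a := Φinv (F i a)) (b := Φinv (F i b))
      rw [hΦΦinv _ (hFmem i a), hΦΦinv _ (hFmem i b)] at h2
      exact h2.mp h1
    have hm : Measurable fun t => Φinv (F i t) := hmono.monotone.measurable
    refine ⟨hm, ?_⟩
    have : IsProbabilityMeasure ((μ i).map fun t => Φinv (F i t)) :=
      Measure.isProbabilityMeasure_map hm.aemeasurable
    refine Measure.ext_of_Iic _ _ fun t => ?_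
    rw [Measure.map_apply hm measurableSet_Iic]
    have hset : (fun z => Φinv (F i z)) ⁻¹' Set.Iic t = Set.Iic (G i (Φ t)) := by
      ext z
      simp only [Set.mem_preimage, Set.mem_Iic]
      constructor
      · intro hz
        have h3 := hΦmono.monotone hz
        rw [hΦΦinv _ (hFmem i z)] at h3
        have h4 : F i z ≤ F i (G i (Φ t)) := by rw [hFG i _ (hΦmem t)]; exact h3
        exact (hFmono i).le_iff_le.mp h4
      · intro hz
        have h3 : F i z ≤ Φ t := by
          have h4 := (hFmono i).monotone hz
          rwa [hFG i _ (hΦmem t)] at h4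
        have h5 : Φ (Φinv (F i z)) ≤ Φ t := by rwa [hΦΦinv _ (hFmem i z)]
        exact hΦmono.le_iff_le.mp h5
    rw [hset]
    refine (ENNReal.toReal_eq_toReal_iff' (measure_ne_top _ _) (measure_ne_top _ _)).mp ?_
    rw [← hF i, ← hΦ, hFG i _ (hΦmem t)]
  -- the coordinatewise backward transforms are measure preserving
  have hB : ∀ i, MeasurePreserving (fun t => G i (Φ t)) (gaussianReal 0 1) (μ i) := by
    intro i
    have hmono : StrictMono fun t => G i (Φ t) := by
      intro a b hab
      have h1 : Φ a < Φ b := hΦmono hab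
      have h2 := (hFmono i).lt_iff_lt (a := G i (Φ a)) (b := G i (Φ b))
      rw [hFG i _ (hΦmem a), hFG i _ (hΦmem b)] at h2
      exact h2.mp h1
    have hm : Measurable fun t => G i (Φ t) := hmono.monotone.measurable
    refine ⟨hm, ?_⟩
    have : IsProbabilityMeasure ((gaussianReal 0 1).map fun t => G i (Φ t)) :=
      Measure.isProbabilityMeasure_map hm.aemeasurable
    refine Measure.ext_of_Iic _ _ fun t => ?_
    rw [Measure.map_apply hm measurableSet_Iic]
    have hset : (fun w => G i (Φ w)) ⁻¹' Set.Iic t = Set.Iic (Φinv (F i t)) := by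
      ext w
      simp only [Set.mem_preimage, Set.mem_Iic]
      constructor
      · intro hw
        have h3 := (hFmono i).monotone hw
        rw [hFG i _ (hΦmem w)] at h3
        have h4 : Φ w ≤ Φ (Φinv (F i t)) := by rw [hΦΦinv _ (hFmem i t)]; exact h3
        exact hΦmono.le_iff_le.mp h4
      · intro hw
        have h3 : Φ w ≤ F i t := by
          have h4 := hΦmono.monotone hw
          rwa [hΦΦinv _ (hFmem i t)] at h4
        have h5 : F i (G i (Φ w)) ≤ F i t := by rwa [hFG i _ (hΦmem w)]
        exact (hFmono i).le_iff_le.mp h5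
    rw [hset]
    refine (ENNReal.toReal_eq_toReal_iff' (measure_ne_top _ _) (measure_ne_top _ _)).mp ?_
    rw [← hΦ, ← hF i, hΦΦinv _ (hFmem i t)]
  -- assemble
  have hPA := measurePreserving_pi μ (fun _ => gaussianReal 0 1) hA
  have hPB := measurePreserving_pi (fun _ : Fin d => gaussianReal 0 1) μ hB
  have hUfun : (fun x : Fin d → ℝ => U.mulVec x) = ⇑(Matrix.toLin' U) :=
    funext fun x => (Matrix.toLin'_apply U x).symm
  have hPL : MeasurePreserving (fun x : Fin d → ℝ => U.mulVec x)
      (Measure.pi fun _ => gaussianReal 0 1) (Measure.pi fun _ => gaussianReal 0 1) := by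
    refine ⟨?_, my_gauss_inv U hU⟩
    rw [hUfun]
    exact (LinearMap.continuous_on_pi _).measurable
  have hcomp := (hPB.comp hPL).comp hPA
  have hreq : r = (fun w i => G i (Φ (w i))) ∘ (fun x : Fin d → ℝ => U.mulVec x)
      ∘ (fun z j => Φinv (F j (z j))) := by
    funext z
    funext i
    rw [hr]
    rfl
  rw [hreq]
  exact hcomp.map_eq
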